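/- Finiteness of the Griesmer bound test: let q ≥ 2 be a prime power and n, k, δ, m integers with 1 ≤ k < n, δ ≥ 0, km ≥ δ, let S = S(n,k,δ) = (n-k)(⌊δ/k⌋+1)+δ+1, let Ĥℕ = {i ∈ ℤ : i ≥ 1} if km = δ and Ĥℕ = {i ∈ ℤ : i ≥ 0} if km > δ, and let i_0 ≥ 1 be an integer with q^{k(m+i_0)-δ} ≥ S. Then for every integer d' with 1 ≤ d' ≤ S, the inequalities ∑_{l=0}^{k(m+i)-δ-1} ⌈d'/q^l⌉ ≤ n(m+i) hold for all i ∈ Ĥℕ if and only if they hold for all i ∈ Ĥℕ with i ≤ i_0. -/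
import Mathlib


/-- **Finiteness of the Griesmer bound test.**
Let `q ≥ 2` be a prime power and `n, k, δ, m` integers with `1 ≤ k < n`, `δ ≥ 0`, `km ≥ δ`,
let `S = (n-k)(⌊δ/k⌋+1)+δ+1` be the generalized Singleton bound and let `i₀ ≥ 1` with
`q^{k(m+i₀)-δ} ≥ S`.  The admissible index set is `{i ≥ 1}` if `km = δ` and `{i ≥ 0}`
otherwise (encoded by `k * m = δ → 1 ≤ i`).  Then for every integer `d'` with `1 ≤ d' ≤ S`,
the Griesmer inequalities `∑_{l=0}^{k(m+i)-δ-1} ⌈d'/q^l⌉ ≤ n(m+i)` hold for all admissible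
`i` if and only if they hold for all admissible `i ≤ i₀`. -/
theorem griesmer_bound_finitely_many_tests (q n k δ m i₀ : ℕ) (hq : IsPrimePow q)
    (hq2 : 2 ≤ q) (hk : 1 ≤ k) (hkn : k < n) (hδm : δ ≤ k * m) (hi₀ : 1 ≤ i₀)
    (S : ℕ) (hS : S = (n - k) * (δ / k + 1) + δ + 1)
    (hqS : (S : ℤ) ≤ (q : ℤ) ^ (k * (m + i₀) - δ))
    (d' : ℕ) (hd'1 : 1 ≤ d') (hd'S : d' ≤ S) :
    (∀ i : ℕ, (k * m = δ → 1 ≤ i) →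
      ∑ l ∈ Finset.range (k * (m + i) - δ), ⌈(d' : ℚ) / (q : ℚ) ^ l⌉ ≤ (n * (m + i) : ℕ)) ↔
    (∀ i : ℕ, (k * m = δ → 1 ≤ i) → i ≤ i₀ →
      ∑ l ∈ Finset.range (k * (m + i) - δ), ⌈(d' : ℚ) / (q : ℚ) ^ l⌉ ≤ (n * (m + i) : ℕ)) := by
  constructor
  · intro h i hadm _
    exact h i hadm
  · intro h i hadm
    by_cases hii : i ≤ i₀
    · exact h i hadm hii
    push_neg at hii
    obtain ⟨j, rfl⟩ : ∃ j, i = i₀ + j := ⟨i - i₀, by omega⟩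
    set L₀ := k * (m + i₀) - δ with hL₀def
    have hδ₀ : δ ≤ k * (m + i₀) := le_trans hδm (Nat.mul_le_mul_left _ (by omega))
    have hke : k * (m + (i₀ + j)) = k * (m + i₀) + k * j := by ring
    have hLeq : k * (m + (i₀ + j)) - δ = L₀ + k * j := by omega
    rw [hLeq]
    -- each term with index ≥ L₀ equals 1
    have hceil : ∀ l : ℕ, L₀ ≤ l → ⌈(d' : ℚ) / (q : ℚ) ^ l⌉ = 1 := by
      intro l hl
      have hq0 : (0 : ℚ) < (q : ℚ) ^ l := by positivity
      have hd'q : (d' : ℚ) ≤ (q : ℚ) ^ l := by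
        have h1 : (d' : ℤ) ≤ (q : ℤ) ^ L₀ := le_trans (by exact_mod_cast hd'S) hqS
        have h2 : (q : ℤ) ^ L₀ ≤ (q : ℤ) ^ l :=
          pow_le_pow_right₀ (by exact_mod_cast Nat.one_le_of_lt hq2) hl
        exact_mod_cast le_trans h1 h2
      rw [Int.ceil_eq_iff]
      constructor
      · have : (0:ℚ) < (d' : ℚ) / (q : ℚ) ^ l := by positivity
        push_cast
        linarith
      · push_cast
        rw [div_le_one hq0]
        exact hd'q
    have hsplit : ∑ l ∈ Finset.range (L₀ + k * j), ⌈(d' : ℚ) / (q : ℚ) ^ l⌉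
        = (∑ l ∈ Finset.range L₀, ⌈(d' : ℚ) / (q : ℚ) ^ l⌉) + k * j := by
      rw [Finset.sum_range_add]
      congr 1
      rw [Finset.sum_congr rfl (fun l _ => hceil (L₀ + l) (Nat.le_add_right _ _))]
      simp
    rw [hsplit]
    have h0 := h i₀ (fun _ => hi₀) le_rfl
    rw [hL₀def.symm] at h0
    have hkj : (k : ℤ) * j ≤ (n : ℤ) * j := by
      exact_mod_cast Nat.mul_le_mul_right j hkn.le
    push_cast at h0 ⊢
    nlinarith [h0, hkj]
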